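/- Let k be a field with more than 2 elements, n ≥ 2, and let E = (X_1 + P(X_2,…,X_n), X_2, …, X_n) be a triangular (Jonquière) automorphism of k^n, where P ∈ k[X_2,…,X_n]. Choose c ∈ k with c ≠ 0, 1 and set d = (1−c)^(−1). Let S_c = (cX_1, X_2, …, X_n), S_d = (dX_1, X_2, …, X_n), and F = S_d E S_d^{-1}. Then S_c F^{-1} S_c^{-1} F = E. -/

import Mathlib

/-- For a field `k` with more than 2 elements, a triangular map
`E = (X₁ + P(X₂,…,Xₙ), X₂, …, Xₙ)` on `k^(n+2)` and `c ≠ 0, 1`, `d = (1-c)⁻¹`,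
`F = S_d ∘ E ∘ S_d⁻¹`, one has `S_c ∘ F⁻¹ ∘ S_c⁻¹ ∘ F = E`. -/
theorem triangular_is_commutator (k : Type*) [Field k] (hcard : 2 < Nat.card k) (n : ℕ)
    (P : (Fin (n + 2) → k) → k)
    (hP : ∀ x y : Fin (n + 2) → k, (∀ i, i ≠ 0 → x i = y i) → P x = P y)
    (c d : k) (hc0 : c ≠ 0) (hc1 : c ≠ 1) (hd : d = (1 - c)⁻¹)
    (E Einv Sc Scinv Sd Sdinv F Finv : (Fin (n + 2) → k) → (Fin (n + 2) → k))
    (hE : ∀ x, E x = Function.update x 0 (x 0 + P x))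
    (hEinv : ∀ x, Einv x = Function.update x 0 (x 0 - P x))
    (hSc : ∀ x, Sc x = Function.update x 0 (c * x 0))
    (hScinv : ∀ x, Scinv x = Function.update x 0 (c⁻¹ * x 0))
    (hSd : ∀ x, Sd x = Function.update x 0 (d * x 0))
    (hSdinv : ∀ x, Sdinv x = Function.update x 0 (d⁻¹ * x 0))
    (hF : F = Sd ∘ E ∘ Sdinv) (hFinv : Finv = Sd ∘ Einv ∘ Sdinv) :
    Sc ∘ Finv ∘ Scinv ∘ F = E := by
  have h1c : (1 : k) - c ≠ 0 := sub_ne_zero.mpr (Ne.symm hc1)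
  have hdne : d ≠ 0 := by rw [hd]; exact inv_ne_zero h1c
  have hPu : ∀ (x : Fin (n + 2) → k) (t : k), P (Function.update x 0 t) = P x := by
    intro x t
    exact hP _ _ fun i hi => Function.update_of_ne hi _ _
  funext x
  simp only [hF, hFinv, Function.comp_apply, hE, hEinv, hSc, hScinv, hSd, hSdinv, hPu,
    Function.update_self, Function.update_idem]
  have hD : c - c ^ 2 * 2 + c ^ 3 ≠ 0 := by
    have h : c - c ^ 2 * 2 + c ^ 3 = c * (1 - c) ^ 2 := by ring
    rw [h]; exact mul_ne_zero hc0 (pow_ne_zero 2 h1c)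
  subst hd
  refine congrArg (Function.update x 0) ?_
  field_simp
  ring
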